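/- arXiv:1804.10100 — 2 statements merged into one kernel-verified Lean document; each statement's English description precedes it below -/
import Mathlib

section
/- Let K be a Lindblad generator on B(H') that is ρ-reversible (self-adjoint for ⟨X,Y⟩_ρ := tr(ρ^{1/2} X† ρ^{1/2} Y)) and generates a completely positive semigroup Ψ_t = e^{−tK}. Then for any matrix C, ⟨I_{2,2}(C), K(I_{2,2}(C))⟩_ρ + ⟨I_{2,2}(C†), K(I_{2,2}(C†))⟩_ρ ≤ ⟨C, K(C)⟩_ρ + ⟨C†, K(C†)⟩_ρ, where I_{2,2}(C) = ρ^{-1/4} |ρ^{1/4} C ρ^{1/4}| ρ^{-1/4}. -/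
open Matrix BigOperators
open scoped ComplexOrder

noncomputable section

variable {n : Type*} [Fintype n] [DecidableEq n]

/-- Apply a real function to a matrix via its spectral decomposition
(defined to be `0` if the matrix is not Hermitian). -/
noncomputable def matFun (A : Matrix n n ℂ) (f : ℝ → ℝ) : Matrix n n ℂ :=
  if hA : A.IsHermitian then
    (hA.eigenvectorUnitary : Matrix n n ℂ) *
      Matrix.diagonal (fun i => (f (hA.eigenvalues i) : ℂ)) *
      star (hA.eigenvectorUnitary : Matrix n n ℂ)
  else 0

/-- Real power of a (Hermitian) matrix. -/
noncomputable def mpow (A : Matrix n n ℂ) (r : ℝ) : Matrix n n ℂ :=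
  matFun A (fun x => x ^ r)

/-- Logarithm of a (Hermitian) matrix. -/
noncomputable def mlog (A : Matrix n n ℂ) : Matrix n n ℂ :=
  matFun A Real.log

/-- Absolute value `|X| = √(X† X)` of a matrix. -/
noncomputable def mAbs (X : Matrix n n ℂ) : Matrix n n ℂ :=
  mpow (Xᴴ * X) (1/2 : ℝ)

/-- Schatten `p`-(quasi)norm `(tr |X|^p)^{1/p}`. -/
noncomputable def schatten (p : ℝ) (X : Matrix n n ℂ) : ℝ :=
  ((mpow (mAbs X) p).trace.re) ^ (1/p)

/-- `Γ_σ^{1/p}(X) = σ^{1/(2p)} X σ^{1/(2p)}`. -/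
noncomputable def gammaPow (σ : Matrix n n ℂ) (p : ℝ) (X : Matrix n n ℂ) :
    Matrix n n ℂ :=
  mpow σ (1/(2*p)) * X * mpow σ (1/(2*p))

/-- Weighted norm `‖X‖_{p,σ} = ‖Γ_σ^{1/p}(X)‖_p`. -/
noncomputable def wnorm (σ : Matrix n n ℂ) (p : ℝ) (X : Matrix n n ℂ) : ℝ :=
  schatten p (gammaPow σ p X)

/-- The power operator `I_{q,p}(X) = Γ_σ^{-1/q}(|Γ_σ^{1/p}(X)|^{p/q})`. -/
noncomputable def powOp (σ : Matrix n n ℂ) (q p : ℝ) (X : Matrix n n ℂ) :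
    Matrix n n ℂ :=
  mpow σ (-(1/(2*q))) * mpow (mAbs (gammaPow σ p X)) (p/q) * mpow σ (-(1/(2*q)))

/-- Umegaki relative entropy `D(ρ‖σ) = tr(ρ log ρ) - tr(ρ log σ)`. -/
noncomputable def relEnt (ρ σ : Matrix n n ℂ) : ℝ :=
  ((ρ * mlog ρ).trace - (ρ * mlog σ).trace).re

/-- The entropy function `Ent_{p,σ}(X)`. -/
noncomputable def Ent (σ : Matrix n n ℂ) (p : ℝ) (X : Matrix n n ℂ) : ℝ :=
  ((mpow (gammaPow σ p X) p * mlog (mpow (gammaPow σ p X) p)).trace).re -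
    ((mpow (gammaPow σ p X) p * mlog σ).trace).re -
    (wnorm σ p X) ^ p * Real.log ((wnorm σ p X) ^ p)

end
/-- Exponential of a superoperator, computed via its matrix representation in the
standard basis of the matrix space. -/
noncomputable def superExp {n : Type*} [Fintype n] [DecidableEq n]
    (K : Matrix n n ℂ →ₗ[ℂ] Matrix n n ℂ) : Matrix n n ℂ →ₗ[ℂ] Matrix n n ℂ :=
  Matrix.toLin (Matrix.stdBasis ℂ n n) (Matrix.stdBasis ℂ n n)
    (NormedSpace.exp
      (LinearMap.toMatrix (Matrix.stdBasis ℂ n n) (Matrix.stdBasis ℂ n n) K))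

/-- The Choi matrix of a superoperator. -/
noncomputable def choi {n : Type*} [Fintype n] [DecidableEq n]
    (Φ : Matrix n n ℂ →ₗ[ℂ] Matrix n n ℂ) : Matrix (n × n) (n × n) ℂ :=
  Matrix.of fun p q => Φ (Matrix.single p.1 q.1 1) p.2 q.2

/-- KMS inner product `⟨X,Y⟩_ρ = tr(ρ^{1/2} X† ρ^{1/2} Y)`. -/
noncomputable def kms {n : Type*} [Fintype n] [DecidableEq n]
    (ρ : Matrix n n ℂ) (X Y : Matrix n n ℂ) : ℂ :=
  (mpow ρ (1/2) * Xᴴ * mpow ρ (1/2) * Y).trace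

/-- The operator `I_{2,2}(C) = ρ^{-1/4} |ρ^{1/4} C ρ^{1/4}| ρ^{-1/4}`. -/
noncomputable def I22 {n : Type*} [Fintype n] [DecidableEq n]
    (ρ : Matrix n n ℂ) (C : Matrix n n ℂ) : Matrix n n ℂ :=
  mpow ρ (-(1/4)) * mAbs (mpow ρ (1/4) * C * mpow ρ (1/4)) * mpow ρ (-(1/4))


noncomputable section Aux

open Matrix BigOperators
open scoped ComplexOrder

variable {n : Type*} [Fintype n] [DecidableEq n]

namespace matFun
variable {A : Matrix n n ℂ}


variable {A : Matrix n n ℂ}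

lemma eq_of_isHermitian (hA : A.IsHermitian) (f : ℝ → ℝ) : matFun A f =
    (hA.eigenvectorUnitary : Matrix n n ℂ) *
      Matrix.diagonal (fun i => (f (hA.eigenvalues i) : ℂ)) *
      star (hA.eigenvectorUnitary : Matrix n n ℂ) := by
  rw [matFun, dif_pos hA]

lemma congr_eigs (hA : A.IsHermitian) {f g : ℝ → ℝ}
    (h : ∀ i, f (hA.eigenvalues i) = g (hA.eigenvalues i)) :
    matFun A f = matFun A g := by
  rw [eq_of_isHermitian hA f, eq_of_isHermitian hA g]
  have : (fun i => (f (hA.eigenvalues i) : ℂ)) = fun i => (g (hA.eigenvalues i) : ℂ) :=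
    funext fun i => by rw [h i]
  rw [this]

lemma mul (hA : A.IsHermitian) (f g : ℝ → ℝ) :
    matFun A f * matFun A g = matFun A (fun x => f x * g x) := by
  rw [eq_of_isHermitian hA f, eq_of_isHermitian hA g,
    eq_of_isHermitian hA (fun x => f x * g x)]
  have h1 : (star (hA.eigenvectorUnitary : Matrix n n ℂ)) *
      (hA.eigenvectorUnitary : Matrix n n ℂ) = 1 := by
    simpa using (hA.eigenvectorUnitary).2.1
  have h2 : (fun i => (f (hA.eigenvalues i) : ℂ) * (g (hA.eigenvalues i) : ℂ)) =
      (fun i => ((f (hA.eigenvalues i) * g (hA.eigenvalues i) : ℝ) : ℂ)) := by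
    funext i; push_cast; ring
  calc (hA.eigenvectorUnitary : Matrix n n ℂ) *
      Matrix.diagonal (fun i => (f (hA.eigenvalues i) : ℂ)) *
      star (hA.eigenvectorUnitary : Matrix n n ℂ) *
      ((hA.eigenvectorUnitary : Matrix n n ℂ) *
        Matrix.diagonal (fun i => (g (hA.eigenvalues i) : ℂ)) *
        star (hA.eigenvectorUnitary : Matrix n n ℂ))
      = (hA.eigenvectorUnitary : Matrix n n ℂ) *
        Matrix.diagonal (fun i => (f (hA.eigenvalues i) : ℂ)) *
        ((star (hA.eigenvectorUnitary : Matrix n n ℂ)) * (hA.eigenvectorUnitary : Matrix n n ℂ)) *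
        Matrix.diagonal (fun i => (g (hA.eigenvalues i) : ℂ)) *
        star (hA.eigenvectorUnitary : Matrix n n ℂ) := by
        simp only [Matrix.mul_assoc]
    _ = _ := by
        rw [h1, Matrix.mul_one]
        rw [Matrix.mul_assoc (hA.eigenvectorUnitary : Matrix n n ℂ),
          Matrix.diagonal_mul_diagonal, h2]

lemma id_eq (hA : A.IsHermitian) : matFun A (fun x => x) = A := by
  rw [eq_of_isHermitian hA]
  exact hA.spectral_theorem.symm

lemma one_eq (hA : A.IsHermitian) : matFun A (fun _ => 1) = 1 := by
  rw [eq_of_isHermitian hA]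
  simpa using (hA.eigenvectorUnitary).2.2

lemma zero_eq (hA : A.IsHermitian) : matFun A (fun _ => 0) = 0 := by
  rw [eq_of_isHermitian hA]
  simp

lemma add (hA : A.IsHermitian) (f g : ℝ → ℝ) :
    matFun A f + matFun A g = matFun A (fun x => f x + g x) := by
  rw [eq_of_isHermitian hA f, eq_of_isHermitian hA g,
    eq_of_isHermitian hA (fun x => f x + g x)]
  rw [← Matrix.add_mul, ← Matrix.mul_add, Matrix.diagonal_add]
  have : (fun i => (f (hA.eigenvalues i) : ℂ) + (g (hA.eigenvalues i) : ℂ)) =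
      (fun i => ((f (hA.eigenvalues i) + g (hA.eigenvalues i) : ℝ) : ℂ)) := by
    funext i; push_cast; ring
  rw [this]

lemma isHermitian (A : Matrix n n ℂ) (f : ℝ → ℝ) : (matFun A f).IsHermitian := by
  by_cases hA : A.IsHermitian
  · rw [eq_of_isHermitian hA]
    have hd : (Matrix.diagonal (fun i => (f (hA.eigenvalues i) : ℂ))).IsHermitian :=
      Matrix.isHermitian_diagonal_of_self_adjoint _
        (funext fun i => Complex.conj_ofReal _)
    unfold Matrix.IsHermitian
    rw [Matrix.conjTranspose_mul, Matrix.conjTranspose_mul, hd.eq,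
      ← Matrix.star_eq_conjTranspose, ← Matrix.star_eq_conjTranspose, star_star,
      Matrix.mul_assoc]
  · rw [matFun, dif_neg hA]
    exact Matrix.isHermitian_zero

lemma posSemidef (hA : A.IsHermitian) {f : ℝ → ℝ}
    (h : ∀ i, 0 ≤ f (hA.eigenvalues i)) : (matFun A f).PosSemidef := by
  rw [eq_of_isHermitian hA, Matrix.star_eq_conjTranspose]
  exact Matrix.PosSemidef.mul_mul_conjTranspose_same
    (Matrix.posSemidef_diagonal_iff.mpr fun i => Complex.zero_le_real.mpr (h i)) _


lemma smul_eq (hA : A.IsHermitian) (c : ℝ) (f : ℝ → ℝ) :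
    matFun A (fun x => c * f x) = c • matFun A f := by
  rw [matFun, dif_pos hA, matFun, dif_pos hA]
  have : (fun i => ((c * f (hA.eigenvalues i) : ℝ) : ℂ)) =
      c • (fun i => ((f (hA.eigenvalues i) : ℝ) : ℂ)) := by
    funext i
    simp [Complex.real_smul]
  rw [this, Matrix.diagonal_smul]
  rw [Matrix.mul_smul, Matrix.smul_mul]

lemma const_eq (hA : A.IsHermitian) (a : ℝ) :
    matFun A (fun _ => a) = algebraMap ℝ (Matrix n n ℂ) a := by
  have h1 : (fun (_ : ℝ) => a) = fun x => a * (fun (_:ℝ) => (1:ℝ)) x := by funext x; ring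
  rw [h1, smul_eq hA, one_eq hA, Algebra.algebraMap_eq_smul_one]

lemma aeval_eq (hA : A.IsHermitian) (p : Polynomial ℝ) :
    matFun A (fun x => p.eval x) = Polynomial.aeval A p := by
  induction p using Polynomial.induction_on with
  | C a => simpa using const_eq hA a
  | add p q hp hq =>
      have := matFun.add hA (fun x => p.eval x) (fun x => q.eval x)
      simp only [Polynomial.eval_add, map_add, ← hp, ← hq]
      rw [← this]
  | monomial k a ih =>
      have h1 : (fun x => Polynomial.eval x (Polynomial.C a * Polynomial.X ^ (k + 1))) =
          fun x => (Polynomial.eval x (Polynomial.C a * Polynomial.X ^ k)) * x := by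
        funext x; simp; ring
      have h2 : Polynomial.C a * Polynomial.X ^ (k + 1) =
          (Polynomial.C a * Polynomial.X ^ k) * Polynomial.X := by ring
      rw [h1, ← matFun.mul hA, ih, id_eq hA, h2, _root_.map_mul]
      simp

lemma aeval_comm (M : Matrix n n ℂ) (p : Polynomial ℝ) :
    M * Polynomial.aeval (Mᴴ * M) p = Polynomial.aeval (M * Mᴴ) p * M := by
  induction p using Polynomial.induction_on with
  | C a => simp [Algebra.algebraMap_eq_smul_one, Matrix.smul_mul, Matrix.mul_smul]
  | add p q hp hq => simp [map_add, Matrix.mul_add, Matrix.add_mul, hp, hq]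
  | monomial k a ih =>
      have h2 : Polynomial.C a * Polynomial.X ^ (k + 1) =
          (Polynomial.C a * Polynomial.X ^ k) * Polynomial.X := by ring
      have e1 : (Polynomial.aeval (Mᴴ * M)) (Polynomial.C a * Polynomial.X ^ k * Polynomial.X) =
          (Polynomial.aeval (Mᴴ * M)) (Polynomial.C a * Polynomial.X ^ k) * (Mᴴ * M) := by
        rw [_root_.map_mul, Polynomial.aeval_X]
      have e2 : (Polynomial.aeval (M * Mᴴ)) (Polynomial.C a * Polynomial.X ^ k * Polynomial.X) =
          (Polynomial.aeval (M * Mᴴ)) (Polynomial.C a * Polynomial.X ^ k) * (M * Mᴴ) := by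
        rw [_root_.map_mul, Polynomial.aeval_X]
      rw [h2, e1, e2, ← Matrix.mul_assoc, ih]
      simp only [Matrix.mul_assoc]

lemma exists_poly (s : Finset ℝ) (f : ℝ → ℝ) :
    ∃ p : Polynomial ℝ, ∀ x ∈ s, p.eval x = f x := by
  refine ⟨Lagrange.interpolate s id f, fun x hx => ?_⟩
  simpa using Lagrange.eval_interpolate_at_node f (Function.injective_id.injOn) hx

/-- The key intertwining identity `M f(MᴴM) = f(MMᴴ) M`. -/
lemma comm (M : Matrix n n ℂ) (f : ℝ → ℝ) :
    M * matFun (Mᴴ * M) f = matFun (M * Mᴴ) f * M := by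
  have h1 : (Mᴴ * M).IsHermitian := (Matrix.posSemidef_conjTranspose_mul_self M).1
  have h2 : (M * Mᴴ).IsHermitian := (Matrix.posSemidef_self_mul_conjTranspose M).1
  obtain ⟨p, hp⟩ := exists_poly
    ((Finset.univ.image h1.eigenvalues) ∪ (Finset.univ.image h2.eigenvalues)) f
  have e1 : matFun (Mᴴ * M) f = matFun (Mᴴ * M) (fun x => p.eval x) :=
    congr_eigs h1 fun i => (hp _ (Finset.mem_union_left _
      (Finset.mem_image_of_mem _ (Finset.mem_univ i)))).symm
  have e2 : matFun (M * Mᴴ) f = matFun (M * Mᴴ) (fun x => p.eval x) :=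
    congr_eigs h2 fun i => (hp _ (Finset.mem_union_right _
      (Finset.mem_image_of_mem _ (Finset.mem_univ i)))).symm
  rw [e1, e2, aeval_eq h1, aeval_eq h2, aeval_comm]


end matFun

section absfacts

private def eFun : ℝ → ℝ := fun x => if 0 < x then x ^ (-((1:ℝ)/2)) else 0
private def chiFun : ℝ → ℝ := fun x => if 0 < x then (1:ℝ) else 0

private lemma real_halves (t : ℝ) (ht : 0 ≤ t) : t ^ ((1:ℝ)/2) * t ^ ((1:ℝ)/2) = t := by
  rw [← Real.rpow_add' ht (by norm_num)]
  norm_num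

private lemma real_quarters (t : ℝ) (ht : 0 ≤ t) :
    t ^ ((1:ℝ)/4) * t ^ ((1:ℝ)/4) = t ^ ((1:ℝ)/2) := by
  rw [← Real.rpow_add' ht (by norm_num)]
  norm_num

private lemma e_mul_sqrt (t : ℝ) (ht : 0 ≤ t) : eFun t * t ^ ((1:ℝ)/2) = chiFun t := by
  rcases ht.lt_or_eq with h | h
  · rw [eFun, chiFun]
    simp only [if_pos h]
    rw [← Real.rpow_add h]
    norm_num
  · rw [eFun, chiFun, ← h]
    simp

private lemma e_sqrt_e (t : ℝ) (ht : 0 ≤ t) : eFun t * t ^ ((1:ℝ)/2) * eFun t = eFun t := by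
  rcases ht.lt_or_eq with h | h
  · rw [eFun]
    simp only [if_pos h]
    rw [← Real.rpow_add h, ← Real.rpow_add h]
    norm_num
  · rw [eFun, ← h]
    simp

private lemma e_mul_id (t : ℝ) (ht : 0 ≤ t) : eFun t * t = t ^ ((1:ℝ)/2) := by
  rcases ht.lt_or_eq with h | h
  · rw [eFun]
    simp only [if_pos h]
    nth_rewrite 2 [← Real.rpow_one t]
    rw [← Real.rpow_add h]
    norm_num
  · rw [eFun, ← h]
    rw [Real.zero_rpow (by norm_num : (1:ℝ)/2 ≠ 0)]
    simp

private lemma psi_cancel (t : ℝ) (ht : 0 ≤ t) :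
    ((1:ℝ) - chiFun t) * t * ((1:ℝ) - chiFun t) = 0 := by
  rcases ht.lt_or_eq with h | h
  · rw [chiFun]; simp [if_pos h]
  · rw [chiFun, ← h]; simp

variable (M : Matrix n n ℂ)

lemma mAbs_eq_matFun : mAbs M = matFun (Mᴴ * M) (fun x => x ^ ((1:ℝ)/2)) := by
  rw [mAbs, mpow]

lemma mAbs_conjTranspose_eq : mAbs (Mᴴ) = matFun (M * Mᴴ) (fun x => x ^ ((1:ℝ)/2)) := by
  rw [mAbs, mpow, Matrix.conjTranspose_conjTranspose]

lemma mAbs_isHermitian : (mAbs M).IsHermitian := by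
  rw [mAbs_eq_matFun]
  exact matFun.isHermitian _ _

lemma mAbs_mul_self : mAbs M * mAbs M = Mᴴ * M := by
  have hN := Matrix.posSemidef_conjTranspose_mul_self M
  rw [mAbs_eq_matFun, matFun.mul hN.1]
  have h : matFun (Mᴴ * M) (fun x => x ^ ((1:ℝ)/2) * x ^ ((1:ℝ)/2)) =
      matFun (Mᴴ * M) (fun x => x) :=
    matFun.congr_eigs hN.1 fun i => real_halves _ (hN.eigenvalues_nonneg i)
  rw [h, matFun.id_eq hN.1]

lemma mAbs_ct_mul_self : mAbs (Mᴴ) * mAbs (Mᴴ) = M * Mᴴ := by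
  have h := mAbs_mul_self (Mᴴ)
  rwa [Matrix.conjTranspose_conjTranspose] at h

/-- `[[|Mᴴ|, M], [Mᴴ, |M|]]` is positive semidefinite. -/
theorem absBlock_posSemidef :
    (Matrix.fromBlocks (mAbs (Mᴴ)) M Mᴴ (mAbs M)).PosSemidef := by
  classical
  have hN := Matrix.posSemidef_conjTranspose_mul_self M
  have hN' := Matrix.posSemidef_self_mul_conjTranspose M
  set R : Matrix n n ℂ := M * matFun (Mᴴ * M) eFun with hR
  set b : Matrix n n ℂ := matFun (Mᴴ * M) (fun x => x ^ ((1:ℝ)/4)) with hb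
  have hbb : b * b = mAbs M := by
    rw [hb, matFun.mul hN.1, mAbs_eq_matFun]
    exact matFun.congr_eigs hN.1 fun i => real_quarters _ (hN.eigenvalues_nonneg i)
  have hbherm : bᴴ = b := by rw [hb]; exact (matFun.isHermitian _ _).eq
  -- R * |M| = M
  have hRB : R * mAbs M = M := by
    have h1 : R * mAbs M = M * matFun (Mᴴ * M)
        (fun x => eFun x * x ^ ((1:ℝ)/2)) := by
      rw [hR, mAbs_eq_matFun, Matrix.mul_assoc, matFun.mul hN.1]
    have h2 : matFun (Mᴴ * M) (fun x => eFun x * x ^ ((1:ℝ)/2)) =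
        matFun (Mᴴ * M) chiFun :=
      matFun.congr_eigs hN.1 fun i => e_mul_sqrt _ (hN.eigenvalues_nonneg i)
    have hψ : M * matFun (Mᴴ * M) (fun x => (1:ℝ) - chiFun x) = 0 := by
      have hZh : (matFun (Mᴴ * M) (fun x => (1:ℝ) - chiFun x))ᴴ =
          matFun (Mᴴ * M) (fun x => (1:ℝ) - chiFun x) :=
        (matFun.isHermitian _ _).eq
      have key : (M * matFun (Mᴴ * M) (fun x => (1:ℝ) - chiFun x))ᴴ *
          (M * matFun (Mᴴ * M) (fun x => (1:ℝ) - chiFun x)) = 0 := by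
        rw [Matrix.conjTranspose_mul, hZh]
        calc matFun (Mᴴ * M) (fun x => (1:ℝ) - chiFun x) * Mᴴ *
            (M * matFun (Mᴴ * M) (fun x => (1:ℝ) - chiFun x))
            = matFun (Mᴴ * M) (fun x => (1:ℝ) - chiFun x) *
              matFun (Mᴴ * M) (fun x => x) *
              matFun (Mᴴ * M) (fun x => (1:ℝ) - chiFun x) := by
              rw [matFun.id_eq hN.1]
              simp only [Matrix.mul_assoc]
          _ = 0 := by
              rw [matFun.mul hN.1, matFun.mul hN.1]
              have hz : matFun (Mᴴ * M)
                  (fun x => ((1:ℝ) - chiFun x) * x * ((1:ℝ) - chiFun x)) =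
                  matFun (Mᴴ * M) (fun _ => (0:ℝ)) :=
                matFun.congr_eigs hN.1 fun i => psi_cancel _ (hN.eigenvalues_nonneg i)
              rw [hz, matFun.zero_eq hN.1]
      exact Matrix.conjTranspose_mul_self_eq_zero.mp key
    have hχ : matFun (Mᴴ * M) chiFun =
        1 - matFun (Mᴴ * M) (fun x => (1:ℝ) - chiFun x) := by
      have h := matFun.add hN.1 chiFun (fun x => (1:ℝ) - chiFun x)
      simp only [add_sub_cancel] at h
      rw [matFun.one_eq hN.1] at h
      linear_combination (norm := module) h
    rw [h1, h2, hχ, Matrix.mul_sub, Matrix.mul_one, hψ, sub_zero]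
  -- R * |M| * Rᴴ = |Mᴴ|
  have hRconj : Rᴴ = matFun (Mᴴ * M) eFun * Mᴴ := by
    rw [hR, Matrix.conjTranspose_mul, (matFun.isHermitian _ _).eq]
  have hRBR : R * mAbs M * Rᴴ = mAbs (Mᴴ) := by
    have h1 : R * mAbs M * Rᴴ = M * matFun (Mᴴ * M)
        (fun x => eFun x * x ^ ((1:ℝ)/2) * eFun x) * Mᴴ := by
      rw [hR, hRconj, mAbs_eq_matFun]
      calc M * matFun (Mᴴ * M) eFun * matFun (Mᴴ * M) (fun x => x ^ ((1:ℝ)/2)) *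
            (matFun (Mᴴ * M) eFun * Mᴴ)
          = M * (matFun (Mᴴ * M) eFun * matFun (Mᴴ * M) (fun x => x ^ ((1:ℝ)/2)) *
              matFun (Mᴴ * M) eFun) * Mᴴ := by
            simp only [Matrix.mul_assoc]
        _ = _ := by rw [matFun.mul hN.1, matFun.mul hN.1]
    have h2 : matFun (Mᴴ * M) (fun x => eFun x * x ^ ((1:ℝ)/2) * eFun x) =
        matFun (Mᴴ * M) eFun :=
      matFun.congr_eigs hN.1 fun i => e_sqrt_e _ (hN.eigenvalues_nonneg i)
    have h3 : M * matFun (Mᴴ * M) eFun * Mᴴ = matFun (M * Mᴴ) eFun * (M * Mᴴ) := by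
      rw [matFun.comm M eFun]
      simp only [Matrix.mul_assoc]
    have h4 : matFun (M * Mᴴ) eFun * (M * Mᴴ) = mAbs (Mᴴ) := by
      have hid : matFun (M * Mᴴ) eFun * (M * Mᴴ) =
          matFun (M * Mᴴ) eFun * matFun (M * Mᴴ) (fun x => x) := by
        rw [matFun.id_eq hN'.1]
      rw [hid, matFun.mul hN'.1, mAbs_conjTranspose_eq]
      exact matFun.congr_eigs hN'.1 fun i => e_mul_id _ (hN'.eigenvalues_nonneg i)
    rw [h1, h2, h3, h4]
  -- assemble
  have hq : (R * b)ᴴ = b * Rᴴ := by rw [Matrix.conjTranspose_mul, hbherm]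
  have b11 : R * b * (b * Rᴴ) = mAbs (Mᴴ) := by
    rw [Matrix.mul_assoc R b (b * Rᴴ), ← Matrix.mul_assoc b b Rᴴ, hbb, ← Matrix.mul_assoc, hRBR]
  have b12 : R * b * b = M := by rw [Matrix.mul_assoc, hbb, hRB]
  have b21 : b * (b * Rᴴ) = Mᴴ := by
    rw [← Matrix.mul_assoc b b Rᴴ, hbb]
    have h := congrArg Matrix.conjTranspose hRB
    rwa [Matrix.conjTranspose_mul, (mAbs_isHermitian M).eq] at h
  have hS : (Matrix.fromBlocks (R * b) 0 b 0) * (Matrix.fromBlocks (R * b) 0 b 0)ᴴ =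
      Matrix.fromBlocks (mAbs (Mᴴ)) M Mᴴ (mAbs M) := by
    rw [Matrix.fromBlocks_conjTranspose, Matrix.fromBlocks_multiply]
    simp only [Matrix.conjTranspose_zero, Matrix.mul_zero, Matrix.zero_mul, add_zero]
    rw [hq, hbherm, b11, b12, b21, hbb]
  rw [← hS]
  exact Matrix.posSemidef_self_mul_conjTranspose _
end absfacts


section mpowfacts
variable {ρ : Matrix n n ℂ} (hρ : ρ.PosDef)

lemma mpow_isHermitian (A : Matrix n n ℂ) (r : ℝ) : (mpow A r).IsHermitian :=
  matFun.isHermitian _ _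

lemma mpow_conjTranspose (A : Matrix n n ℂ) (r : ℝ) : (mpow A r)ᴴ = mpow A r :=
  (mpow_isHermitian A r).eq

lemma mpow_mul_mpow (hρ : ρ.PosDef) (a b : ℝ) : mpow ρ a * mpow ρ b = mpow ρ (a + b) := by
  rw [mpow, mpow, mpow, matFun.mul hρ.1]
  exact matFun.congr_eigs hρ.1 fun i => (Real.rpow_add (hρ.eigenvalues_pos i) a b).symm

lemma mpow_zero' (hρ : ρ.PosDef) : mpow ρ (0 : ℝ) = 1 := by
  rw [mpow]
  have h : matFun ρ (fun x => x ^ (0:ℝ)) = matFun ρ (fun _ => 1) :=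
    matFun.congr_eigs hρ.1 fun i => Real.rpow_zero _
  rw [h, matFun.one_eq hρ.1]

lemma mpow_quarter_inv (hρ : ρ.PosDef) : mpow ρ (1/4) * mpow ρ (-(1/4)) = 1 := by
  rw [mpow_mul_mpow hρ]
  norm_num
  exact mpow_zero' hρ

lemma mpow_inv_quarter (hρ : ρ.PosDef) : mpow ρ (-(1/4)) * mpow ρ (1/4) = 1 := by
  rw [mpow_mul_mpow hρ]
  norm_num
  exact mpow_zero' hρ

lemma mpow_quarter_sq (hρ : ρ.PosDef) : mpow ρ (1/4) * mpow ρ (1/4) = mpow ρ (1/2) := by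
  rw [mpow_mul_mpow hρ]
  norm_num

/-- `Γ (I22 ρ C) = |Γ C|` -/
lemma gamma_I22 (hρ : ρ.PosDef) (C : Matrix n n ℂ) :
    mpow ρ (1/4) * I22 ρ C * mpow ρ (1/4) =
      mAbs (mpow ρ (1/4) * C * mpow ρ (1/4)) := by
  rw [I22]
  calc mpow ρ (1/4) * (mpow ρ (-(1/4)) * mAbs (mpow ρ (1/4) * C * mpow ρ (1/4)) *
        mpow ρ (-(1/4))) * mpow ρ (1/4)
      = (mpow ρ (1/4) * mpow ρ (-(1/4))) * mAbs (mpow ρ (1/4) * C * mpow ρ (1/4)) *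
        (mpow ρ (-(1/4)) * mpow ρ (1/4)) := by
        simp only [Matrix.mul_assoc]
    _ = _ := by rw [mpow_quarter_inv hρ, mpow_inv_quarter hρ, Matrix.one_mul, Matrix.mul_one]

/-- inverse: `ρ^{-1/4} Γ(X) ρ^{-1/4} = X` -/
lemma gamma_inv (hρ : ρ.PosDef) (X : Matrix n n ℂ) :
    mpow ρ (-(1/4)) * (mpow ρ (1/4) * X * mpow ρ (1/4)) * mpow ρ (-(1/4)) = X := by
  calc mpow ρ (-(1/4)) * (mpow ρ (1/4) * X * mpow ρ (1/4)) * mpow ρ (-(1/4))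
      = (mpow ρ (-(1/4)) * mpow ρ (1/4)) * X * (mpow ρ (1/4) * mpow ρ (-(1/4))) := by
        simp only [Matrix.mul_assoc]
    _ = X := by rw [mpow_inv_quarter hρ, mpow_quarter_inv hρ, Matrix.one_mul, Matrix.mul_one]

/-- kms in terms of Γ and Hilbert-Schmidt form -/
lemma kms_eq_hs (hρ : ρ.PosDef) (X Y : Matrix n n ℂ) :
    kms ρ X Y = ((mpow ρ (1/4) * X * mpow ρ (1/4))ᴴ *
      (mpow ρ (1/4) * Y * mpow ρ (1/4))).trace := by
  rw [kms]
  have hct : (mpow ρ (1/4) * X * mpow ρ (1/4))ᴴ =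
      mpow ρ (1/4) * Xᴴ * mpow ρ (1/4) := by
    rw [Matrix.conjTranspose_mul, Matrix.conjTranspose_mul, mpow_conjTranspose]
    simp only [Matrix.mul_assoc]
  rw [hct]
  have h1 : mpow ρ (1/4) * Xᴴ * mpow ρ (1/4) * (mpow ρ (1/4) * Y * mpow ρ (1/4)) =
      mpow ρ (1/4) * Xᴴ * mpow ρ (1/2) * Y * mpow ρ (1/4) := by
    calc mpow ρ (1/4) * Xᴴ * mpow ρ (1/4) * (mpow ρ (1/4) * Y * mpow ρ (1/4))
        = mpow ρ (1/4) * Xᴴ * (mpow ρ (1/4) * mpow ρ (1/4)) * Y * mpow ρ (1/4) := by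
          simp only [Matrix.mul_assoc]
      _ = _ := by rw [mpow_quarter_sq hρ]
  rw [h1, Matrix.trace_mul_comm (mpow ρ (1/4) * Xᴴ * mpow ρ (1/2) * Y) (mpow ρ (1/4))]
  have h2 : mpow ρ (1/4) * (mpow ρ (1/4) * Xᴴ * mpow ρ (1/2) * Y) =
      mpow ρ (1/2) * Xᴴ * mpow ρ (1/2) * Y := by
    calc mpow ρ (1/4) * (mpow ρ (1/4) * Xᴴ * mpow ρ (1/2) * Y)
        = (mpow ρ (1/4) * mpow ρ (1/4)) * Xᴴ * mpow ρ (1/2) * Y := by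
          simp only [Matrix.mul_assoc]
      _ = _ := by rw [mpow_quarter_sq hρ]
  rw [h2]

end mpowfacts


lemma gamma_inv' {ρ : Matrix n n ℂ} (hρ : ρ.PosDef) (X : Matrix n n ℂ) :
    mpow ρ (1/4) * (mpow ρ (-(1/4)) * X * mpow ρ (-(1/4))) * mpow ρ (1/4) = X := by
  calc mpow ρ (1/4) * (mpow ρ (-(1/4)) * X * mpow ρ (-(1/4))) * mpow ρ (1/4)
      = (mpow ρ (1/4) * mpow ρ (-(1/4))) * X * (mpow ρ (-(1/4)) * mpow ρ (1/4)) := by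
        simp only [Matrix.mul_assoc]
    _ = X := by rw [mpow_quarter_inv hρ, mpow_inv_quarter hρ, Matrix.one_mul, Matrix.mul_one]



/-- Kraus decomposition from a PSD Choi matrix. -/
theorem kraus_of_choi_posSemidef (Φ : Matrix n n ℂ →ₗ[ℂ] Matrix n n ℂ)
    (h : (choi Φ).PosSemidef) :
    ∃ V : (n × n) → Matrix n n ℂ, ∀ X, Φ X = ∑ k, V k * X * (V k)ᴴ := by
  obtain ⟨L, hL⟩ : ∃ L : Matrix (n × n) (n × n) ℂ, choi Φ = Lᴴ * L := by
    open scoped MatrixOrder in exact CStarAlgebra.nonneg_iff_eq_star_mul_self.mp h.nonneg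
  refine ⟨fun k => Matrix.of (fun a i => star (L k (i, a))), fun X => ?_⟩
  have hX : Φ X = ∑ i, ∑ j, X i j • Φ (Matrix.single i j 1) := by
    conv_lhs => rw [Matrix.matrix_eq_sum_single X]
    rw [map_sum]
    refine Finset.sum_congr rfl fun i _ => ?_
    rw [map_sum]
    refine Finset.sum_congr rfl fun j _ => ?_
    have h5 : Matrix.single i j (X i j) = X i j • Matrix.single i j 1 := by
      rw [Matrix.smul_single, smul_eq_mul, mul_one]
    rw [h5, _root_.map_smul]
  ext a b
  rw [hX]
  have hchoi : ∀ i j, Φ (Matrix.single i j 1) a b =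
      ∑ k, star (L k (i, a)) * L k (j, b) := by
    intro i j
    have h1 : Φ (Matrix.single i j 1) a b = choi Φ (i, a) (j, b) := rfl
    rw [h1, hL, Matrix.mul_apply]
    refine Finset.sum_congr rfl fun k _ => ?_
    rw [Matrix.conjTranspose_apply]
  have hl : (∑ i, ∑ j, X i j • Φ (Matrix.single i j 1)) a b =
      ∑ i, ∑ j, ∑ k, X i j * (star (L k (i, a)) * L k (j, b)) := by
    rw [Matrix.sum_apply]
    refine Finset.sum_congr rfl fun i _ => ?_
    rw [Matrix.sum_apply]
    refine Finset.sum_congr rfl fun j _ => ?_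
    rw [Matrix.smul_apply, hchoi, smul_eq_mul, Finset.mul_sum]
  rw [hl, Matrix.sum_apply]
  have hterm : ∀ k : n × n,
      ((Matrix.of (fun a i => star (L k (i, a))) : Matrix n n ℂ) * X *
        ((Matrix.of (fun a i => star (L k (i, a))) : Matrix n n ℂ))ᴴ) a b =
      ∑ i, ∑ j, star (L k (i, a)) * X i j * L k (j, b) := by
    intro k
    calc ((Matrix.of (fun a i => star (L k (i, a))) : Matrix n n ℂ) * X *
          ((Matrix.of (fun a i => star (L k (i, a))) : Matrix n n ℂ))ᴴ) a b
        = ∑ j, (∑ i, star (L k (i, a)) * X i j) * L k (j, b) := by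
          rw [Matrix.mul_apply]
          refine Finset.sum_congr rfl fun j _ => ?_
          rw [Matrix.mul_apply, Matrix.conjTranspose_apply]
          simp only [Matrix.of_apply, star_star]
      _ = ∑ j, ∑ i, star (L k (i, a)) * X i j * L k (j, b) := by
          refine Finset.sum_congr rfl fun j _ => ?_
          rw [Finset.sum_mul]
      _ = ∑ i, ∑ j, star (L k (i, a)) * X i j * L k (j, b) := Finset.sum_comm
  calc ∑ i, ∑ j, ∑ k, X i j * (star (L k (i, a)) * L k (j, b))
      = ∑ i, ∑ k : n × n, ∑ j, X i j * (star (L k (i, a)) * L k (j, b)) := by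
        refine Finset.sum_congr rfl fun i _ => ?_
        exact Finset.sum_comm
    _ = ∑ k : n × n, ∑ i, ∑ j, X i j * (star (L k (i, a)) * L k (j, b)) := Finset.sum_comm
    _ = ∑ k : n × n, ∑ i, ∑ j, star (L k (i, a)) * X i j * L k (j, b) := by
        refine Finset.sum_congr rfl fun k _ => Finset.sum_congr rfl fun i _ =>
          Finset.sum_congr rfl fun j _ => by ring
    _ = _ := by
        refine Finset.sum_congr rfl fun k _ => ?_
        rw [hterm]

/-- trace of product of PSD matrices has nonnegative real part -/
theorem trace_mul_posSemidef_nonneg {m : Type*} [Fintype m] [DecidableEq m]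
    {P Q : Matrix m m ℂ} (hP : P.PosSemidef) (hQ : Q.PosSemidef) :
    0 ≤ ((P * Q).trace).re := by
  obtain ⟨E, hE⟩ : ∃ E : Matrix m m ℂ, P = Eᴴ * E := by
    open scoped MatrixOrder in exact CStarAlgebra.nonneg_iff_eq_star_mul_self.mp hP.nonneg
  obtain ⟨G, hG⟩ : ∃ G : Matrix m m ℂ, Q = Gᴴ * G := by
    open scoped MatrixOrder in exact CStarAlgebra.nonneg_iff_eq_star_mul_self.mp hQ.nonneg
  have h1 : (P * Q).trace = ((E * Gᴴ) * (E * Gᴴ)ᴴ).trace := by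
    rw [hE, hG]
    have h2 : Eᴴ * E * (Gᴴ * G) = Eᴴ * (E * (Gᴴ * G)) := by
      simp only [Matrix.mul_assoc]
    rw [h2, Matrix.trace_mul_comm]
    congr 1
    rw [Matrix.conjTranspose_mul, Matrix.conjTranspose_conjTranspose]
    simp only [Matrix.mul_assoc]
  rw [h1]
  have h3 : ((E * Gᴴ) * (E * Gᴴ)ᴴ).trace =
      ((∑ i, ∑ k, (Complex.normSq ((E * Gᴴ) i k) : ℝ) : ℝ) : ℂ) := by
    push_cast
    rw [Matrix.trace]
    refine Finset.sum_congr rfl fun i _ => ?_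
    rw [Matrix.diag_apply, Matrix.mul_apply]
    refine Finset.sum_congr rfl fun k _ => ?_
    rw [Matrix.conjTranspose_apply, ← Complex.mul_conj]
    rfl
  rw [h3, Complex.ofReal_re]
  exact Finset.sum_nonneg fun i _ => Finset.sum_nonneg fun k _ => Complex.normSq_nonneg _



lemma trace_fromBlocks (A : Matrix n n ℂ) (B : Matrix n n ℂ) (C : Matrix n n ℂ)
    (D : Matrix n n ℂ) :
    (Matrix.fromBlocks A B C D).trace = A.trace + D.trace := by
  rw [Matrix.trace, Matrix.trace, Matrix.trace, Fintype.sum_sum_type]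
  rfl

lemma trace_block_expansion {κ : Type*} [Fintype κ] (W : κ → Matrix n n ℂ)
    (A B M : Matrix n n ℂ) :
    ((Matrix.fromBlocks A M Mᴴ B) *
      ∑ k, (Matrix.fromBlocks (W k) 0 0 (W k)) * (Matrix.fromBlocks A (-M) (-Mᴴ) B) *
        (Matrix.fromBlocks (W k) 0 0 (W k))ᴴ).trace
    = (A * ∑ k, W k * A * (W k)ᴴ).trace + (B * ∑ k, W k * B * (W k)ᴴ).trace
      - (Mᴴ * ∑ k, W k * M * (W k)ᴴ).trace - (M * ∑ k, W k * Mᴴ * (W k)ᴴ).trace := by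
  have hterm : ∀ k : κ,
      ((Matrix.fromBlocks A M Mᴴ B) *
        ((Matrix.fromBlocks (W k) 0 0 (W k)) * (Matrix.fromBlocks A (-M) (-Mᴴ) B) *
          (Matrix.fromBlocks (W k) 0 0 (W k))ᴴ)).trace
      = (A * (W k * A * (W k)ᴴ)).trace + (B * (W k * B * (W k)ᴴ)).trace
        - (Mᴴ * (W k * M * (W k)ᴴ)).trace - (M * (W k * Mᴴ * (W k)ᴴ)).trace := by
    intro k
    rw [Matrix.fromBlocks_conjTranspose, Matrix.fromBlocks_multiply,
      Matrix.fromBlocks_multiply, Matrix.fromBlocks_multiply]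
    simp only [Matrix.conjTranspose_zero, Matrix.mul_zero, Matrix.zero_mul, add_zero, zero_add, sub_zero, neg_zero,
      Matrix.mul_neg, Matrix.neg_mul]
    rw [trace_fromBlocks, Matrix.trace_add, Matrix.trace_add, Matrix.trace_neg,
      Matrix.trace_neg]
    ring
  rw [Matrix.mul_sum, Matrix.trace_sum]
  calc ∑ k, ((Matrix.fromBlocks A M Mᴴ B) *
        ((Matrix.fromBlocks (W k) 0 0 (W k)) * (Matrix.fromBlocks A (-M) (-Mᴴ) B) *
          (Matrix.fromBlocks (W k) 0 0 (W k))ᴴ)).trace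
      = ∑ k, ((A * (W k * A * (W k)ᴴ)).trace + (B * (W k * B * (W k)ᴴ)).trace
        - (Mᴴ * (W k * M * (W k)ᴴ)).trace - (M * (W k * Mᴴ * (W k)ᴴ)).trace) :=
        Finset.sum_congr rfl fun k _ => hterm k
    _ = _ := by
        rw [Matrix.mul_sum, Matrix.trace_sum, Matrix.mul_sum, Matrix.trace_sum,
          Matrix.mul_sum, Matrix.trace_sum, Matrix.mul_sum, Matrix.trace_sum]
        rw [Finset.sum_sub_distrib, Finset.sum_sub_distrib, Finset.sum_add_distrib]


/-- derivative at 0 of `t ↦ Re (L (exp ℂ (t • B)))` -/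
lemma hasDerivAt_re_lin_exp {N : Type*} [Fintype N] [DecidableEq N]
    (B : Matrix N N ℂ) (L : Matrix N N ℂ →ₗ[ℂ] ℂ) :
    HasDerivAt (fun t : ℝ => (L (NormedSpace.exp (t • B))).re) ((L B).re) 0 := by
  letI : SeminormedRing (Matrix N N ℂ) := Matrix.linftyOpSemiNormedRing
  letI : NormedRing (Matrix N N ℂ) := Matrix.linftyOpNormedRing
  letI : NormedAlgebra ℝ (Matrix N N ℂ) := Matrix.linftyOpNormedAlgebra
  letI : NormedAlgebra ℂ (Matrix N N ℂ) := Matrix.linftyOpNormedAlgebra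
  letI : FiniteDimensional ℝ (Matrix N N ℂ) := FiniteDimensional.trans ℝ ℂ (Matrix N N ℂ)
  have hexp : (fun t : ℝ => NormedSpace.exp (t • B)) =
      (fun t : ℝ => NormedSpace.exp (t • B)) := by
    rfl
  have hF : HasDerivAt (fun t : ℝ => NormedSpace.exp (t • B)) B 0 := by
    rw [hexp]
    have h := hasDerivAt_exp_smul_const (𝕂 := ℝ) B (0 : ℝ)
    simp only [zero_smul, NormedSpace.exp_zero, one_mul] at h
    exact h
  set LR : Matrix N N ℂ →ₗ[ℝ] ℝ := Complex.reLm.comp (L.restrictScalars ℝ) with hLR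
  have hC : HasFDerivAt (fun X : Matrix N N ℂ => LR X)
      (LinearMap.toContinuousLinearMap LR) (NormedSpace.exp ((0:ℝ) • B)) :=
    (LinearMap.toContinuousLinearMap LR).hasFDerivAt
  have hcomp := (hC.comp (0:ℝ) hF.hasFDerivAt).hasDerivAt
  have e : ((LinearMap.toContinuousLinearMap LR).comp
      (ContinuousLinearMap.toSpanSingleton ℝ B)) 1 = (L B).re := by
    simp [hLR]
  rw [← e]
  exact hcomp

lemma deriv_nonneg_of_nonneg {g : ℝ → ℝ} {d : ℝ} (hg : HasDerivAt g d 0)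
    (h0 : g 0 = 0) (hpos : ∀ t : ℝ, 0 ≤ t → 0 ≤ g t) : 0 ≤ d := by
  have hs : HasDerivWithinAt g d (Set.Ioi 0) 0 := hg.hasDerivWithinAt
  rw [hasDerivWithinAt_iff_tendsto_slope] at hs
  have hset : Set.Ioi (0:ℝ) \ {0} = Set.Ioi 0 :=
    Set.diff_singleton_eq_self (by simp)
  rw [hset] at hs
  refine ge_of_tendsto hs ?_
  refine eventually_nhdsWithin_of_forall fun t ht => ?_
  have ht' : (0:ℝ) < t := ht
  rw [slope_def_field]
  have hval : 0 ≤ (g t - 0) / (t - 0) := by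
    apply div_nonneg
    · simpa using hpos t ht'.le
    · simpa using ht'.le
  simpa [h0] using hval



/-- The linear functional `X ↦ tr(A·Θ_X A) + tr(B·Θ_X B) - tr(Mᴴ·Θ_X M) - tr(M·Θ_X Mᴴ)`
where `Θ_X Y = r4 · (toLin X) (r4' · Y · r4') · r4`. -/
noncomputable def linFunc (r4 r4' A B M : Matrix n n ℂ) :
    Matrix (n × n) (n × n) ℂ →ₗ[ℂ] ℂ where
  toFun X :=
    (A * (r4 * ((Matrix.toLin (Matrix.stdBasis ℂ n n) (Matrix.stdBasis ℂ n n) X)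
        (r4' * A * r4')) * r4)).trace
    + (B * (r4 * ((Matrix.toLin (Matrix.stdBasis ℂ n n) (Matrix.stdBasis ℂ n n) X)
        (r4' * B * r4')) * r4)).trace
    - (Mᴴ * (r4 * ((Matrix.toLin (Matrix.stdBasis ℂ n n) (Matrix.stdBasis ℂ n n) X)
        (r4' * M * r4')) * r4)).trace
    - (M * (r4 * ((Matrix.toLin (Matrix.stdBasis ℂ n n) (Matrix.stdBasis ℂ n n) X)
        (r4' * Mᴴ * r4')) * r4)).trace
  map_add' X Y := by
    simp only [map_add, LinearMap.add_apply, Matrix.mul_add, Matrix.add_mul,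
      Matrix.trace_add]
    ring
  map_smul' c X := by
    simp only [_root_.map_smul, LinearMap.smul_apply, Matrix.mul_smul, Matrix.smul_mul,
      Matrix.trace_smul, smul_eq_mul, RingHom.id_apply]
    ring


end Aux

/-- For a ρ-reversible Lindblad generator `K` generating a completely positive
semigroup `e^{-tK}`, `⟨I_{2,2}(C), K(I_{2,2}(C))⟩_ρ + ⟨I_{2,2}(C†), K(I_{2,2}(C†))⟩_ρ
≤ ⟨C, K(C)⟩_ρ + ⟨C†, K(C†)⟩_ρ`. -/
theorem dirichlet_abs_comparison {n : Type*} [Fintype n] [DecidableEq n]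
    (ρ : Matrix n n ℂ) (hρ : ρ.PosDef) (hρ1 : ρ.trace = 1)
    (K : Matrix n n ℂ →ₗ[ℂ] Matrix n n ℂ)
    (hherm : ∀ X, K (Xᴴ) = (K X)ᴴ)
    (hsa : ∀ X Y, kms ρ X (K Y) = kms ρ (K X) Y)
    (hK1 : K 1 = 0)
    (hCP : ∀ t : ℝ, 0 ≤ t → (choi (superExp ((-t) • K))).PosSemidef)
    (C : Matrix n n ℂ) :
    (kms ρ (I22 ρ C) (K (I22 ρ C)) + kms ρ (I22 ρ (Cᴴ)) (K (I22 ρ (Cᴴ)))).re ≤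
    (kms ρ C (K C) + kms ρ (Cᴴ) (K (Cᴴ))).re := by
  classical
  set r4 : Matrix n n ℂ := mpow ρ (1/4) with hr4
  set r4' : Matrix n n ℂ := mpow ρ (-(1/4)) with hr4'
  set M : Matrix n n ℂ := r4 * C * r4 with hM
  set A : Matrix n n ℂ := mAbs (Mᴴ) with hA
  set B : Matrix n n ℂ := mAbs M with hB
  have hr4h : r4ᴴ = r4 := mpow_conjTranspose ρ _
  have hr4'h : r4'ᴴ = r4' := mpow_conjTranspose ρ _
  have hginv : ∀ X : Matrix n n ℂ, r4' * (r4 * X * r4) * r4' = X := fun X => gamma_inv hρ X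
  have hginv' : ∀ X : Matrix n n ℂ, r4 * (r4' * X * r4') * r4 = X := fun X => gamma_inv' hρ X
  have hMct : Mᴴ = r4 * Cᴴ * r4 := by
    rw [hM, Matrix.conjTranspose_mul, Matrix.conjTranspose_mul, hr4h]
    simp only [Matrix.mul_assoc]
  have hGI : r4 * I22 ρ C * r4 = B := gamma_I22 hρ C
  have hGI' : r4 * I22 ρ (Cᴴ) * r4 = A := by
    rw [hA, hMct]
    exact gamma_I22 hρ (Cᴴ)
  have hI22C : I22 ρ C = r4' * B * r4' := by rw [← hGI]; exact (hginv _).symm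
  have hI22C' : I22 ρ (Cᴴ) = r4' * A * r4' := by rw [← hGI']; exact (hginv _).symm
  have hCM : C = r4' * M * r4' := by rw [hM]; exact (hginv C).symm
  have hCM' : Cᴴ = r4' * Mᴴ * r4' := by
    rw [hMct]; exact (hginv (Cᴴ)).symm
  have hAh : Aᴴ = A := (mAbs_isHermitian _).eq
  have hBh : Bᴴ = B := (mAbs_isHermitian _).eq
  set KM : Matrix (n × n) (n × n) ℂ :=
    LinearMap.toMatrix (Matrix.stdBasis ℂ n n) (Matrix.stdBasis ℂ n n) K with hKM
  set BM : Matrix (n × n) (n × n) ℂ := -KM with hBM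
  set L : Matrix (n × n) (n × n) ℂ →ₗ[ℂ] ℂ := linFunc r4 r4' A B M with hL
  -- bridge between `superExp` and `exp (t • BM)`
  have harg : ∀ t : ℝ, LinearMap.toMatrix (Matrix.stdBasis ℂ n n) (Matrix.stdBasis ℂ n n)
      ((-t) • K) = t • BM := by
    intro t
    have e1 : (-t) • K = ((-t : ℝ) : ℂ) • K := by
      rw [← smul_one_smul ℂ (-t : ℝ) K, Complex.real_smul, mul_one]
    have e2 : ((t : ℝ) : ℂ) • KM = t • KM := by
      rw [← smul_one_smul ℂ (t : ℝ) KM, Complex.real_smul, mul_one]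
    rw [e1, _root_.map_smul, hBM, Complex.ofReal_neg, neg_smul, e2, smul_neg]
  have hbridge : ∀ t : ℝ, Matrix.toLin (Matrix.stdBasis ℂ n n) (Matrix.stdBasis ℂ n n)
      (NormedSpace.exp (t • BM)) = superExp ((-t) • K) := by
    intro t
    rw [superExp, harg t]
  -- the function g
  set g : ℝ → ℝ := fun t => (L (NormedSpace.exp (t • BM))).re with hg
  -- g 0 = 0
  have hg0 : g 0 = 0 := by
    rw [hg]
    simp only [zero_smul, NormedSpace.exp_zero]
    rw [hL]
    simp only [linFunc, LinearMap.coe_mk, AddHom.coe_mk, Matrix.toLin_one, LinearMap.id_coe,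
      id_eq]
    rw [hginv' A, hginv' B, hginv' M, hginv' (Mᴴ)]
    rw [hA, hB, mAbs_ct_mul_self, mAbs_mul_self]
    have hz : (M * Mᴴ).trace + (Mᴴ * M).trace - (Mᴴ * M).trace - (M * Mᴴ).trace = 0 := by
      ring
    rw [hz]
    simp
  -- derivative of g at 0
  have hD : HasDerivAt g ((L BM).re) 0 := hasDerivAt_re_lin_exp BM L
  -- nonnegativity of g on [0, ∞)
  have hpos : ∀ t : ℝ, 0 ≤ t → 0 ≤ g t := by
    intro t ht
    obtain ⟨V, hV⟩ := kraus_of_choi_posSemidef _ (hCP t ht)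
    set W : (n × n) → Matrix n n ℂ := fun k => r4 * V k * r4' with hW
    have hθ : ∀ Y : Matrix n n ℂ,
        r4 * ((Matrix.toLin (Matrix.stdBasis ℂ n n) (Matrix.stdBasis ℂ n n)
          (NormedSpace.exp (t • BM))) (r4' * Y * r4')) * r4
        = ∑ k, W k * Y * (W k)ᴴ := by
      intro Y
      rw [hbridge t, hV]
      rw [Matrix.mul_sum, Matrix.sum_mul]
      refine Finset.sum_congr rfl fun k _ => ?_
      rw [hW]
      rw [Matrix.conjTranspose_mul, Matrix.conjTranspose_mul, hr4h, hr4'h]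
      simp only [Matrix.mul_assoc]
    have hLt : (L (NormedSpace.exp (t • BM))) =
        ((Matrix.fromBlocks A M Mᴴ B) *
          ∑ k, (Matrix.fromBlocks (W k) 0 0 (W k)) * (Matrix.fromBlocks A (-M) (-Mᴴ) B) *
            (Matrix.fromBlocks (W k) 0 0 (W k))ᴴ).trace := by
      rw [trace_block_expansion, hL]
      simp only [linFunc, LinearMap.coe_mk, AddHom.coe_mk]
      rw [hθ A, hθ B, hθ M, hθ (Mᴴ)]
    have hPpsd : (Matrix.fromBlocks A M Mᴴ B).PosSemidef := by
      rw [hA, hB]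
      exact absBlock_posSemidef M
    have hP'psd : (Matrix.fromBlocks A (-M) (-Mᴴ) B).PosSemidef := by
      have h := hPpsd.mul_mul_conjTranspose_same
        (Matrix.fromBlocks 1 0 0 (-1) : Matrix (n ⊕ n) (n ⊕ n) ℂ)
      have he : (Matrix.fromBlocks 1 0 0 (-1) : Matrix (n ⊕ n) (n ⊕ n) ℂ) *
          (Matrix.fromBlocks A M Mᴴ B) *
          (Matrix.fromBlocks 1 0 0 (-1) : Matrix (n ⊕ n) (n ⊕ n) ℂ)ᴴ =
          Matrix.fromBlocks A (-M) (-Mᴴ) B := by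
        rw [Matrix.fromBlocks_conjTranspose]
        simp only [Matrix.conjTranspose_one, Matrix.conjTranspose_zero,
          Matrix.conjTranspose_neg, Matrix.fromBlocks_multiply, Matrix.one_mul, Matrix.mul_one,
          Matrix.zero_mul, Matrix.mul_zero, Matrix.neg_mul, Matrix.mul_neg, add_zero, zero_add,
          neg_neg, neg_zero]
      rwa [he] at h
    have hQpsd : (∑ k, (Matrix.fromBlocks (W k) 0 0 (W k)) *
        (Matrix.fromBlocks A (-M) (-Mᴴ) B) *
        (Matrix.fromBlocks (W k) 0 0 (W k))ᴴ).PosSemidef := by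
      refine Finset.sum_induction _ _ (fun a b ha hb => ha.add hb) Matrix.PosSemidef.zero
        fun k _ => ?_
      exact hP'psd.mul_mul_conjTranspose_same _
    have htr := trace_mul_posSemidef_nonneg hPpsd hQpsd
    rw [hg]
    simp only
    rw [hLt]
    exact htr
  -- conclude
  have hd : 0 ≤ (L BM).re := deriv_nonneg_of_nonneg hD hg0 hpos
  have hLBM : (L BM).re = -((L KM).re) := by
    rw [hBM, map_neg, Complex.neg_re]
  have hLKM : L KM = (kms ρ (I22 ρ C) (K (I22 ρ C)) + kms ρ (I22 ρ (Cᴴ)) (K (I22 ρ (Cᴴ))))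
      - (kms ρ C (K C) + kms ρ (Cᴴ) (K (Cᴴ))) := by
    rw [hL]
    simp only [linFunc, LinearMap.coe_mk, AddHom.coe_mk, hKM, Matrix.toLin_toMatrix]
    have k1 : kms ρ (I22 ρ C) (K (I22 ρ C)) = (B * (r4 * K (r4' * B * r4') * r4)).trace := by
      rw [kms_eq_hs hρ, ← hr4, hGI, hBh, ← hI22C]
    have k2 : kms ρ (I22 ρ (Cᴴ)) (K (I22 ρ (Cᴴ))) =
        (A * (r4 * K (r4' * A * r4') * r4)).trace := by
      rw [kms_eq_hs hρ, ← hr4, hGI', hAh, ← hI22C']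
    have k3 : kms ρ C (K C) = (Mᴴ * (r4 * K (r4' * M * r4') * r4)).trace := by
      rw [kms_eq_hs hρ, ← hr4, ← hM, ← hCM]
    have k4 : kms ρ (Cᴴ) (K (Cᴴ)) = (M * (r4 * K (r4' * Mᴴ * r4') * r4)).trace := by
      rw [kms_eq_hs hρ, ← hr4, ← hMct, Matrix.conjTranspose_conjTranspose, ← hCM']
    rw [k1, k2, k3, k4]
    ring
  have hfin : (L KM).re ≤ 0 := by
    have := hd
    rw [hLBM] at this
    linarith
  rw [hLKM, Complex.sub_re] at hfin
  linarith
end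

section
/- Suppose for all n a sequence of tests T_n satisfies log tr(σ^{⊗n} T_n) ≥ −n D(ρ‖σ) − 2√(nγ log(1/tr(ρ^{⊗n}T_n))) + log tr(ρ^{⊗n}T_n), where γ = ‖ρσ^{-1}‖_∞ ≥ 1. If additionally tr(σ^{⊗n} T_n) ≤ e^{−nr} for some r > D(ρ‖σ), then the Type I error α_n = 1 − tr(ρ^{⊗n} T_n) satisfies α_n ≥ 1 − e^{−nf} with f = (√(γ + r − D(ρ‖σ)) − √γ)². -/
/-- Algebraic form of the finite-blocklength strong converse for quantum hypothesis
testing: if `log β ≥ -nD - 2√(nγ log(1/p)) + log p`, `β ≤ e^{-nr}` with `r > D`,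
then `p ≤ e^{-nf}` (i.e. the Type I error `1 - p` is at least `1 - e^{-nf}`) with
`f = (√(γ + (r - D)) - √γ)²`. -/
theorem strong_converse_algebra (D γ r : ℝ) (n : ℕ) (β p : ℝ)
    (hD : 0 ≤ D) (hγ : 1 ≤ γ) (hr : D < r) (hn : 1 ≤ n)
    (hβ0 : 0 < β) (hβ : β ≤ Real.exp (-(n * r)))
    (hp0 : 0 < p) (hp1 : p ≤ 1)
    (hmain : -(n * D) - 2 * Real.sqrt (n * γ * Real.log (1 / p)) + Real.log p ≤
      Real.log β) :
    1 - Real.exp (-(n * (Real.sqrt (γ + (r - D)) - Real.sqrt γ) ^ 2)) ≤ 1 - p := by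
  have hn0 : (0:ℝ) ≤ (n:ℝ) := Nat.cast_nonneg n
  set δ : ℝ := r - D with hδdef
  have hδ : 0 < δ := by simp [hδdef]; linarith
  set L : ℝ := Real.log (1 / p) with hL
  have hL0 : 0 ≤ L := by
    rw [hL, Real.log_nonneg_iff (by positivity)]
    rw [le_div_iff₀ hp0]; linarith
  have hlogp : Real.log p = -L := by
    rw [hL, one_div, Real.log_inv]; ring
  have hlogβ : Real.log β ≤ -((n:ℝ) * r) := by
    calc Real.log β ≤ Real.log (Real.exp (-(n * r))) :=
          Real.log_le_log hβ0 hβ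
      _ = -((n:ℝ) * r) := Real.log_exp _
  have hkey : (n:ℝ) * δ ≤ 2 * Real.sqrt ((n:ℝ) * γ) * Real.sqrt L + L := by
    have h2 : Real.sqrt ((n:ℝ) * γ * L) = Real.sqrt ((n:ℝ) * γ) * Real.sqrt L :=
      Real.sqrt_mul (by positivity) L
    rw [hlogp] at hmain
    nlinarith [hmain, hlogβ, h2]
  have hγ0 : (0:ℝ) ≤ γ := by linarith
  have hsum : Real.sqrt ((n:ℝ) * γ + (n:ℝ) * δ) ≤ Real.sqrt ((n:ℝ) * γ) + Real.sqrt L := by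
    rw [show Real.sqrt ((n:ℝ) * γ) + Real.sqrt L
        = Real.sqrt ((Real.sqrt ((n:ℝ) * γ) + Real.sqrt L) ^ 2) from
        (Real.sqrt_sq (by positivity)).symm]
    apply Real.sqrt_le_sqrt
    have h1 : Real.sqrt ((n:ℝ) * γ) ^ 2 = (n:ℝ) * γ := Real.sq_sqrt (by positivity)
    have h2 : Real.sqrt L ^ 2 = L := Real.sq_sqrt hL0
    nlinarith [hkey]
  -- rewrite sqrt(nγ + nδ) = √n * √(γ+δ), sqrt(nγ) = √n √γ
  have e1 : Real.sqrt ((n:ℝ) * γ + (n:ℝ) * δ) = Real.sqrt n * Real.sqrt (γ + δ) := by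
    rw [← Real.sqrt_mul hn0]; ring_nf
  have e2 : Real.sqrt ((n:ℝ) * γ) = Real.sqrt n * Real.sqrt γ := Real.sqrt_mul hn0 γ
  have hsqrtL : Real.sqrt n * (Real.sqrt (γ + δ) - Real.sqrt γ) ≤ Real.sqrt L := by
    rw [e1, e2] at hsum
    nlinarith
  have hdiff0 : 0 ≤ Real.sqrt (γ + δ) - Real.sqrt γ := by
    have := Real.sqrt_le_sqrt (show γ ≤ γ + δ by linarith)
    linarith
  have hfinal : (n:ℝ) * (Real.sqrt (γ + δ) - Real.sqrt γ) ^ 2 ≤ L := by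
    have hsq := mul_self_le_mul_self (by positivity) hsqrtL
    have hn2 : Real.sqrt n * Real.sqrt n = (n:ℝ) := Real.mul_self_sqrt hn0
    have hL2 : Real.sqrt L * Real.sqrt L = L := Real.mul_self_sqrt hL0
    nlinarith
  have hp : p ≤ Real.exp (-((n:ℝ) * (Real.sqrt (γ + δ) - Real.sqrt γ) ^ 2)) := by
    calc p = Real.exp (Real.log p) := (Real.exp_log hp0).symm
      _ = Real.exp (-L) := by rw [hlogp]
      _ ≤ _ := Real.exp_le_exp.mpr (by linarith)
  rw [hδdef] at hp
  linarith
end
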